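/- Let q be an odd prime power and ω ∈ F_q^*. The plane quartic curve C_4 with affine equation Y^2 = X^4 - 24ωX^2 + 16ω^2 is birationally equivalent over F_q to the elliptic curve with Weierstrass equation (1/(2ω))Y^2 = X^3 - X; equivalently, the affine F_q-point counts satisfy N_q(C_4) - 2 = N_q(C_3) - 1, where C_3 is the projective curve (1/(2ω))Y^2 = X^3 - X. -/

import Mathlib

/-- The quartic `C_4 : Y² = X⁴ - 24ωX² + 16ω²` is birationally equivalent over `F_q`
to the elliptic curve `C_3 : (1/(2ω))Y² = X³ - X`.  In terms of point counts (the
nonsingular model of `C_4` has two rational points over its point at infinity, and the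
projective curve `C_3` has exactly one point at infinity): the number of affine
`F_q`-points of `C_4`, plus `2`, equals the number of projective `F_q`-points of `C_3`,
i.e. the number of affine points of `C_3` plus `1`. -/
theorem quartic_birational_to_elliptic (q : ℕ) (hq : IsPrimePow q) (h8 : q % 8 = 1)
    (F : Type*) [Field F] [Fintype F] (hF : Fintype.card F = q)
    (ω : F) (hω : ω ≠ 0) :
    {x : F × F | x.2 ^ 2 = x.1 ^ 4 - 24 * ω * x.1 ^ 2 + 16 * ω ^ 2}.ncard + 2
      = {x : F × F | (2 * ω)⁻¹ * x.2 ^ 2 = x.1 ^ 3 - x.1}.ncard + 1 := by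
  classical
  have h2 : (2 : F) ≠ 0 := by
    intro h
    have hdvd : ringChar F ∣ 2 := (CharP.cast_eq_zero_iff F (ringChar F) 2).mp (by exact_mod_cast h)
    have hne1 : ringChar F ≠ 1 := CharP.ringChar_ne_one
    have h2c : ringChar F = 2 := (Nat.le_of_dvd (by norm_num) hdvd).lt_or_eq.elim
      (fun hlt => absurd (by omega : ringChar F = 0 ∨ ringChar F = 1)
        (by push_neg; exact ⟨CharP.ringChar_ne_zero_of_finite F, hne1⟩)) id
    have : (2:ℕ) ∣ Fintype.card F := (prime_dvd_char_iff_dvd_card 2).mp (by rw [h2c])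
    rw [hF] at this; omega
  obtain ⟨r, hr⟩ : IsSquare (2:F) := FiniteField.isSquare_two_iff.mpr (by rw [hF, h8]; omega)
  -- hr : 2 = r * r
  have hr2 : r ^ 2 = 2 := by rw [sq]; exact hr.symm
  have hr0 : r ≠ 0 := fun h => h2 (by rw [← hr2, h]; ring)
  have h8F : (8 : F) ≠ 0 := by
    have : (8:F) = 2 ^ 3 := by norm_num
    rw [this]; exact pow_ne_zero _ h2
  have h16F : (16 : F) ≠ 0 := by
    have : (16:F) = 2 ^ 4 := by norm_num
    rw [this]; exact pow_ne_zero _ h2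
  have h128 : (128 : F) ≠ 0 := by
    have : (128:F) = 2 ^ 7 := by norm_num
    rw [this]; exact pow_ne_zero _ h2
  have h2ω : (2 : F) * ω ≠ 0 := mul_ne_zero h2 hω
  set S4 : Set (F × F) := {x : F × F | x.2 ^ 2 = x.1 ^ 4 - 24 * ω * x.1 ^ 2 + 16 * ω ^ 2} with hS4
  set S3 : Set (F × F) := {x : F × F | (2 * ω)⁻¹ * x.2 ^ 2 = x.1 ^ 3 - x.1} with hS3def
  set B : Set (F × F) := S3 \ {((1:F), (0:F))} with hBdef
  set f : F × F → F × F := fun p =>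
    (1 - (p.2 - p.1 ^ 2 + 12 * ω) / (8 * ω), p.1 * (p.2 - p.1 ^ 2 + 12 * ω) * r / (16 * ω)) with hf
  set g : F × F → F × F := fun p =>
    (r * p.2 / (1 - p.1), (r * p.2 / (1 - p.1)) ^ 2 - 12 * ω + 8 * ω * (1 - p.1)) with hg
  -- t never vanishes on S4
  have ht : ∀ p ∈ S4, p.2 - p.1 ^ 2 + 12 * ω ≠ 0 := by
    intro p hp h
    have hp' : p.2 ^ 2 = p.1 ^ 4 - 24 * ω * p.1 ^ 2 + 16 * ω ^ 2 := hp
    have : (128 : F) * ω ^ 2 = 0 := by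
      linear_combination hp' - (p.2 + p.1 ^ 2 - 12 * ω) * h
    exact mul_ne_zero h128 (pow_ne_zero 2 hω) this
  -- B points have first coord ≠ 1
  have hB1 : ∀ p ∈ B, (1 : F) - p.1 ≠ 0 := by
    intro p hp h1
    have hx1 : p.1 = 1 := by linear_combination -h1
    have hp3 : (2 * ω)⁻¹ * p.2 ^ 2 = p.1 ^ 3 - p.1 := hp.1
    have hy : p.2 = 0 := by
      rw [hx1] at hp3
      norm_num at hp3
      rcases hp3 with (h | h) | h
      · exact absurd h hω
      · exact absurd h h2
      · exact h
    exact hp.2 (by rw [Set.mem_singleton_iff, Prod.ext_iff]; exact ⟨hx1, hy⟩)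
  have hmapsf : Set.MapsTo f S4 B := by
    intro p hp
    have hp' : p.2 ^ 2 = p.1 ^ 4 - 24 * ω * p.1 ^ 2 + 16 * ω ^ 2 := hp
    have htp := ht p hp
    constructor
    · show (2 * ω)⁻¹ * _ ^ 2 = _ ^ 3 - _
      simp only [hf]; field_simp
      linear_combination 512 * p.1 ^ 2 * (p.2 - p.1 ^ 2 + 12 * ω) ^ 2 * hr2 + 512 * (p.2 - p.1 ^ 2 + 12 * ω) * hp'
    · intro hmem
      rw [Set.mem_singleton_iff, Prod.ext_iff] at hmem
      have h1 := hmem.1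
      simp only [hf] at h1
      apply htp
      have : (p.2 - p.1 ^ 2 + 12 * ω) / (8 * ω) = 0 := by linear_combination -h1
      exact (div_eq_zero_iff.mp this).resolve_right (mul_ne_zero h8F hω)
  have hmapsg : Set.MapsTo g B S4 := by
    intro p hp
    have h1X := hB1 p hp
    have hY : p.2 ^ 2 = 2 * ω * (p.1 ^ 3 - p.1) := by
      have hp3 : (2 * ω)⁻¹ * p.2 ^ 2 = p.1 ^ 3 - p.1 := hp.1
      field_simp at hp3
      linear_combination hp3
    show _ ^ 2 = _ ^ 4 - 24 * ω * _ ^ 2 + 16 * ω ^ 2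
    simp only [hg]; field_simp
    linear_combination 16 * ω * (1 - p.1) ^ 3 * p.2 ^ 2 * hr2 + 32 * ω * (1 - p.1) ^ 3 * hY
  have hleft : Set.LeftInvOn g f S4 := by
    intro p hp
    have htp := ht p hp
    have hden : (1 : F) - (f p).1 = (p.2 - p.1 ^ 2 + 12 * ω) / (8 * ω) := by
      simp only [hf]; ring
    have hx : (g (f p)).1 = p.1 := by
      simp only [hg, hf]
      have e : (1:F) - (1 - (p.2 - p.1 ^ 2 + 12 * ω) / (8 * ω)) = (p.2 - p.1 ^ 2 + 12 * ω) / (8 * ω) := by ring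
      rw [e]; field_simp
      linear_combination 8 * p.1 * hr2
    have hy : (g (f p)).2 = p.2 := by
      simp only [hg, hf]
      have e : (1:F) - (1 - (p.2 - p.1 ^ 2 + 12 * ω) / (8 * ω)) = (p.2 - p.1 ^ 2 + 12 * ω) / (8 * ω) := by ring
      rw [e]; field_simp
      linear_combination 64 * p.1 ^ 2 * (r ^ 2 + 2) * hr2
    exact Prod.ext hx hy
  have hright : Set.RightInvOn g f B := by
    intro p hp
    have h1X := hB1 p hp
    have hx : (f (g p)).1 = p.1 := by
      simp only [hf, hg]
      field_simp
      ring
    have hy : (f (g p)).2 = p.2 := by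
      simp only [hf, hg]
      field_simp
      linear_combination (8 * ω * (1 - p.1) ^ 2 * p.2 + ((-8) * p.1 * p.2 * ω + 16 * p.1 ^ 2 * p.2 * ω + (-8) * p.1 ^ 3 * p.2 * ω)) * hr2
    exact Prod.ext hx hy
  have hbij : Set.BijOn f S4 B := Set.InvOn.bijOn ⟨hleft, hright⟩ hmapsf hmapsg
  have hcard1 : S4.ncard = B.ncard := by
    rw [← hbij.image_eq, Set.ncard_image_of_injOn hbij.injOn]
  have h10 : ((1:F), (0:F)) ∈ S3 := by
    show (2 * ω)⁻¹ * (0:F) ^ 2 = (1:F) ^ 3 - 1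
    ring
  have hS3eq : S3 = insert ((1:F), (0:F)) B := by
    rw [hBdef, Set.insert_diff_singleton, Set.insert_eq_self.mpr h10]
  have hcard2 : S3.ncard = B.ncard + 1 := by
    rw [hS3eq, Set.ncard_insert_of_notMem (fun h => h.2 rfl) (Set.toFinite B)]
  rw [hcard1, hcard2]
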